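/- Spectral gap comparison of 3AP counts: let A ⊆ ℤ/Nℤ (N odd) with density δ, let β = (1/|B|)·1_B for a set B ⊆ ℤ/Nℤ, and let f = β * 1_A. Suppose that for all r in a set Γ ⊆ ℤ/Nℤ with Γ ⊇ Δ_{θ} (the θ-spectrum of A) one has |β̂(r) − 1| ≤ η and |β̂(−2r) − 1| ≤ η. Then |T(1_A) − T(f)| ≤ (1/N)·(3η + 3η²+η³)·∑_{r∈Γ}|Â(r)|³ + (2/N)·∑_{r∉Γ}|Â(r)|³, where T(g) = ∑_{x+y=2z} g(x)g(y)g(2z). -/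

import Mathlib

open Finset
open Complex

set_option linter.unusedSectionVars false

section Aux

/-- The Fourier coefficient `ĝ(r) = ∑_x g(x) e^{-2πixr/N}` of `g : ℤ/Nℤ → ℝ`. -/
noncomputable def ftransf {N : ℕ} [NeZero N] (g : ZMod N → ℝ) (r : ZMod N) : ℂ :=
  ∑ x : ZMod N, (g x : ℂ) * Complex.exp (-(2 * Real.pi * Complex.I * ((x * r).val : ℕ) / N))

/-- The weighted count of three-term progressions `T(g) = ∑_{x+y=2z} g(x) g(y) g(2z)`. -/
noncomputable def tripleCount {N : ℕ} [NeZero N] (g : ZMod N → ℝ) : ℝ :=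
  ∑ x : ZMod N, ∑ z : ZMod N, g x * g (2 * z - x) * g (2 * z)

/-- Indicator function of a finite subset of `ℤ/Nℤ`. -/
noncomputable def ind {N : ℕ} (S : Finset (ZMod N)) : ZMod N → ℝ :=
  fun x => if x ∈ S then 1 else 0

variable {N : ℕ} [NeZero N]

lemma char_eq (a : ZMod N) :
    Complex.exp (-(2 * Real.pi * Complex.I * (a.val : ℕ) / N)) = ZMod.stdAddChar (-a) := by
  have h : (-a : ZMod N) = ((-(a.val : ℤ) : ℤ) : ZMod N) := by
    push_cast [ZMod.natCast_val, ZMod.intCast_zmod_cast]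
    simp [ZMod.natCast_val, ZMod.intCast_cast]
  rw [h, ZMod.stdAddChar_coe]
  push_cast
  ring_nf

lemma orth (t : ZMod N) :
    ∑ r : ZMod N, ZMod.stdAddChar (t * r) = if t = 0 then (N : ℂ) else 0 := by
  split_ifs with h
  · simp [h]
  · have := AddChar.sum_eq_zero_of_ne_one (ZMod.isPrimitive_stdAddChar N h)
    simpa [AddChar.mulShift_apply] using this

lemma ftransf_eq (g : ZMod N → ℝ) (r : ZMod N) :
    ftransf g r = ∑ x : ZMod N, (g x : ℂ) * ZMod.stdAddChar (-(x * r)) := by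
  unfold ftransf
  exact Finset.sum_congr rfl fun x _ => by rw [char_eq]

lemma norm_char (a : ZMod N) : ‖ZMod.stdAddChar a‖ = 1 := by
  rw [ZMod.stdAddChar_apply, Circle.norm_coe]

lemma conj_char (a : ZMod N) :
    (starRingEnd ℂ) (ZMod.stdAddChar a) = ZMod.stdAddChar (-a) := by
  rw [AddChar.map_neg_eq_inv, ← Complex.inv_eq_conj]
  exact norm_char a

lemma ftransf_neg (g : ZMod N → ℝ) (r : ZMod N) :
    ftransf g (-r) = (starRingEnd ℂ) (ftransf g r) := by
  rw [ftransf_eq, ftransf_eq, map_sum]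
  refine Finset.sum_congr rfl fun x _ => ?_
  rw [map_mul, Complex.conj_ofReal, conj_char]
  congr 2
  ring

lemma norm_ftransf_neg (g : ZMod N → ℝ) (r : ZMod N) :
    ‖ftransf g (-r)‖ = ‖ftransf g r‖ := by
  rw [ftransf_neg]; exact RCLike.norm_conj _

lemma two_unit (hN : Odd N) : IsUnit (2 : ZMod N) := by
  have h : Nat.Coprime 2 N := Nat.coprime_two_left.mpr hN
  have := (ZMod.isUnit_iff_coprime 2 N).mpr h
  simpa using this

lemma tripleCount_eq (hN : Odd N) (g : ZMod N → ℝ) :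
    tripleCount g = ∑ x : ZMod N, ∑ y : ZMod N, g x * g y * g (x + y) := by
  unfold tripleCount
  refine Finset.sum_congr rfl fun x _ => ?_
  obtain ⟨u, hu⟩ := two_unit hN
  have h1 : ∑ z : ZMod N, g x * g (2 * z - x) * g (2 * z)
      = ∑ w : ZMod N, g x * g (w - x) * g w := by
    rw [← Equiv.sum_comp (Units.mulLeft u) (fun w => g x * g (w - x) * g w)]
    refine Finset.sum_congr rfl fun z _ => ?_
    simp [Units.mulLeft, hu]
  rw [h1, ← Equiv.sum_comp (Equiv.addLeft x) (fun w => g x * g (w - x) * g w)]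
  refine Finset.sum_congr rfl fun y _ => ?_
  simp

lemma key (hN : Odd N) (g : ZMod N → ℝ) :
    (N : ℂ) * (tripleCount g : ℂ) = ∑ r : ZMod N, ftransf g r ^ 2 * ftransf g (-r) := by
  have hft : ∀ r : ZMod N, ftransf g (-r) = ∑ w : ZMod N, (g w : ℂ) * ZMod.stdAddChar (w * r) := by
    intro r
    rw [ftransf_eq]
    refine Finset.sum_congr rfl fun w _ => ?_
    congr 1
    rw [mul_neg, neg_neg]
  have step1 : ∀ r : ZMod N, ftransf g r ^ 2 * ftransf g (-r)
      = ∑ x : ZMod N, ∑ y : ZMod N, ∑ w : ZMod N,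
          ((g x : ℂ) * g y * g w) * ZMod.stdAddChar ((w - x - y) * r) := by
    intro r
    rw [sq, ftransf_eq g r, hft r, Finset.sum_mul_sum, Finset.sum_mul]
    refine Finset.sum_congr rfl fun x _ => ?_
    rw [Finset.sum_mul]
    refine Finset.sum_congr rfl fun y _ => ?_
    rw [Finset.mul_sum]
    refine Finset.sum_congr rfl fun w _ => ?_
    have harg : ((w - x - y) * r : ZMod N) = -(x * r) + (-(y * r) + w * r) := by ring
    rw [harg, AddChar.map_add_eq_mul, AddChar.map_add_eq_mul]
    ring
  calc (N : ℂ) * (tripleCount g : ℂ)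
      = ∑ x : ZMod N, ∑ y : ZMod N, ((g x : ℂ) * g y * g (x + y)) * N := by
        rw [tripleCount_eq hN]
        push_cast
        rw [Finset.mul_sum]
        refine Finset.sum_congr rfl fun x _ => ?_
        rw [Finset.mul_sum]
        exact Finset.sum_congr rfl fun y _ => by ring
    _ = ∑ x : ZMod N, ∑ y : ZMod N, ∑ w : ZMod N,
          (if w - x - y = 0 then ((g x : ℂ) * g y * g w) * N else 0) := by
        refine Finset.sum_congr rfl fun x _ => Finset.sum_congr rfl fun y _ => ?_
        have hcond : ∀ w : ZMod N, (w - x - y = 0) ↔ (w = x + y) := by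
          intro w; rw [sub_sub, sub_eq_zero]
        rw [Finset.sum_congr rfl (fun w _ => by rw [if_congr (hcond w) rfl rfl]),
          Finset.sum_ite_eq' Finset.univ (x + y) (fun w => ((g x : ℂ) * g y * g w) * N)]
        simp
    _ = ∑ x : ZMod N, ∑ y : ZMod N, ∑ w : ZMod N,
          ((g x : ℂ) * g y * g w) * ∑ r : ZMod N, ZMod.stdAddChar ((w - x - y) * r) := by
        refine Finset.sum_congr rfl fun x _ => Finset.sum_congr rfl fun y _ =>
          Finset.sum_congr rfl fun w _ => ?_
        rw [orth]
        split_ifs <;> simp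
    _ = ∑ r : ZMod N, ftransf g r ^ 2 * ftransf g (-r) := by
        simp_rw [step1, Finset.mul_sum]
        conv_rhs => rw [Finset.sum_comm]
        refine Finset.sum_congr rfl fun x _ => ?_
        conv_rhs => rw [Finset.sum_comm]
        refine Finset.sum_congr rfl fun y _ => ?_
        conv_rhs => rw [Finset.sum_comm]

lemma conv_ftransf (A B : Finset (ZMod N)) (r : ZMod N) :
    ftransf (fun x => ∑ y : ZMod N, ((B.card : ℝ))⁻¹ * ind B y * ind A (x - y)) r
      = ftransf (fun x => ((B.card : ℝ))⁻¹ * ind B x) r * ftransf (ind A) r := by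
  rw [ftransf_eq, ftransf_eq (fun x => ((B.card : ℝ))⁻¹ * ind B x), ftransf_eq (ind A),
    Finset.sum_mul_sum]
  calc ∑ x : ZMod N, ((∑ y : ZMod N, ((B.card : ℝ))⁻¹ * ind B y * ind A (x - y) : ℝ) : ℂ)
          * ZMod.stdAddChar (-(x * r))
      = ∑ y : ZMod N, ∑ x : ZMod N,
          ((((B.card : ℝ))⁻¹ * ind B y : ℝ) : ℂ) * ((ind A (x - y) : ℝ) : ℂ)
            * ZMod.stdAddChar (-(x * r)) := by
        rw [Finset.sum_comm]
        refine Finset.sum_congr rfl fun x _ => ?_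
        push_cast
        rw [Finset.sum_mul]
    _ = ∑ y : ZMod N, (((((B.card : ℝ))⁻¹ * ind B y : ℝ) : ℂ) * ZMod.stdAddChar (-(y * r)))
          * ∑ x : ZMod N, ((ind A x : ℝ) : ℂ) * ZMod.stdAddChar (-(x * r)) := by
        refine Finset.sum_congr rfl fun y _ => ?_
        rw [Finset.mul_sum]
        refine (Fintype.sum_equiv (Equiv.addRight y) _ _ fun x => ?_).symm
        have harg : (-((x + y) * r) : ZMod N) = -(x * r) + -(y * r) := by ring
        simp only [Equiv.coe_addRight, harg, AddChar.map_add_eq_mul, add_sub_cancel_right]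
        ring
    _ = _ := by
        refine Finset.sum_congr rfl fun y _ => ?_
        rw [Finset.mul_sum]

lemma sum_ind (S : Finset (ZMod N)) : ∑ x : ZMod N, ind S x = S.card := by
  simp [ind, Finset.sum_ite_mem]

lemma norm_beta_le (B : Finset (ZMod N)) (r : ZMod N) :
    ‖ftransf (fun x => ((B.card : ℝ))⁻¹ * ind B x) r‖ ≤ 1 := by
  rw [ftransf_eq]
  refine le_trans (norm_sum_le _ _) ?_
  have h1 : ∀ x : ZMod N,
      ‖((((B.card : ℝ))⁻¹ * ind B x : ℝ) : ℂ) * ZMod.stdAddChar (-(x * r))‖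
        = ((B.card : ℝ))⁻¹ * ind B x := by
    intro x
    have hnn : (0:ℝ) ≤ ((B.card : ℝ))⁻¹ * ind B x :=
      mul_nonneg (by positivity) (by unfold ind; split <;> norm_num)
    simp only [norm_mul, norm_char, mul_one, Complex.norm_real, Real.norm_eq_abs]
    rw [_root_.abs_of_nonneg (show (0:ℝ) ≤ ((B.card : ℝ))⁻¹ by positivity),
      _root_.abs_of_nonneg (show (0:ℝ) ≤ ind B x by unfold ind; split <;> norm_num)]
  rw [Finset.sum_congr rfl fun x _ => h1 x, ← Finset.mul_sum, sum_ind]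
  rcases Nat.eq_zero_or_pos B.card with h | h
  · simp [h]
  · rw [inv_mul_cancel₀ (by positivity)]

lemma scalar_bound {b : ℂ} {η : ℝ} (h : ‖b - 1‖ ≤ η) :
    ‖1 - b ^ 2 * (starRingEnd ℂ) b‖ ≤ 3 * η + 3 * η ^ 2 + η ^ 3 := by
  set e := b - 1 with he
  have hb : b = 1 + e := by rw [he]; ring
  have hc : (starRingEnd ℂ) b = 1 + (starRingEnd ℂ) e := by rw [hb]; simp
  have hce : ‖(starRingEnd ℂ) e‖ = ‖e‖ := RCLike.norm_conj e
  have hid : 1 - b ^ 2 * (starRingEnd ℂ) b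
      = -(2 * e + (starRingEnd ℂ) e + e ^ 2
          + (2 * (e * (starRingEnd ℂ) e) + e ^ 2 * (starRingEnd ℂ) e)) := by
    rw [hb, map_add, map_one]; ring
  rw [hid, norm_neg]
  have h0 : (0:ℝ) ≤ ‖e‖ := norm_nonneg e
  have a1 : ‖(2:ℂ) * e‖ = 2 * ‖e‖ := by rw [norm_mul]; norm_num
  have a2 : ‖e ^ 2‖ = ‖e‖ ^ 2 := norm_pow e 2
  have a3 : ‖(2:ℂ) * (e * (starRingEnd ℂ) e)‖ = 2 * (‖e‖ * ‖e‖) := by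
    rw [norm_mul, norm_mul, hce]; norm_num
  have a4 : ‖e ^ 2 * (starRingEnd ℂ) e‖ = ‖e‖ ^ 2 * ‖e‖ := by rw [norm_mul, norm_pow, hce]
  have hkey : ‖2 * e + (starRingEnd ℂ) e + e ^ 2
      + (2 * (e * (starRingEnd ℂ) e) + e ^ 2 * (starRingEnd ℂ) e)‖
      ≤ 2 * ‖e‖ + ‖e‖ + ‖e‖ ^ 2 + (2 * (‖e‖ * ‖e‖) + ‖e‖ ^ 2 * ‖e‖) := by
    refine le_trans (norm_add_le _ _) (add_le_add ?_ ?_)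
    · refine le_trans (norm_add_le _ _) (add_le_add ?_ a2.le)
      exact le_trans (norm_add_le _ _) (add_le_add a1.le hce.le)
    · exact le_trans (norm_add_le _ _) (add_le_add a3.le a4.le)
  refine le_trans hkey ?_
  nlinarith [pow_le_pow_left₀ h0 h 2, pow_le_pow_left₀ h0 h 3, mul_le_mul h h h0 (le_trans h0 h)]


end Aux

theorem stmt19 {N : ℕ} [NeZero N] (hN : Odd N) (A B : Finset (ZMod N))
    (Γ : Finset (ZMod N)) (θ η : ℝ)
    (hΓ : ∀ r : ZMod N, θ * A.card ≤ ‖ftransf (ind A) r‖ → r ∈ Γ)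
    (hβ : ∀ r ∈ Γ,
      ‖ftransf (fun x => ((B.card : ℝ))⁻¹ * ind B x) r - 1‖ ≤ η ∧
      ‖ftransf (fun x => ((B.card : ℝ))⁻¹ * ind B x) (-2 * r) - 1‖ ≤ η) :
    |tripleCount (ind A) -
        tripleCount (fun x => ∑ y : ZMod N, ((B.card : ℝ))⁻¹ * ind B y * ind A (x - y))| ≤
      (1 / N) * (3 * η + 3 * η ^ 2 + η ^ 3) * (∑ r ∈ Γ, ‖ftransf (ind A) r‖ ^ 3) +
        (2 / N) * ∑ r ∈ Γᶜ, ‖ftransf (ind A) r‖ ^ 3 := by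
  classical
  set β : ZMod N → ℝ := fun x => ((B.card : ℝ))⁻¹ * ind B x with hβdef
  set fA : ZMod N → ℝ := fun x => ∑ y : ZMod N, β y * ind A (x - y) with hfAdef
  set F : ZMod N → ℂ := fun r => ftransf (ind A) r with hFdef
  set bb : ZMod N → ℂ := fun r => ftransf β r with hbbdef
  have hNpos : (0:ℝ) < N := by
    have := NeZero.pos N
    exact_mod_cast this
  have hNne : ((N:ℕ) : ℂ) ≠ 0 := by
    exact_mod_cast Nat.cast_ne_zero.mpr (NeZero.ne N)
  have hG : ∀ r : ZMod N, ftransf fA r = bb r * F r := fun r => conv_ftransf A B r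
  -- the difference function
  set D : ZMod N → ℂ := fun r => F r ^ 2 * F (-r) - (bb r * F r) ^ 2 * (bb (-r) * F (-r))
    with hDdef
  have hdiff : ((tripleCount (ind A) - tripleCount fA : ℝ) : ℂ) = (N : ℂ)⁻¹ * ∑ r : ZMod N, D r := by
    have h1 := key hN (ind A)
    have h2 := key hN fA
    have h3 : (N : ℂ) * ((tripleCount (ind A) - tripleCount fA : ℝ) : ℂ)
        = ∑ r : ZMod N, D r := by
      push_cast
      rw [mul_sub, h1, h2, ← Finset.sum_sub_distrib]
      refine Finset.sum_congr rfl fun r _ => ?_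
      rw [hG r, hG (-r)]
    rw [← h3, inv_mul_cancel_left₀ hNne]
  have habs : |tripleCount (ind A) - tripleCount fA|
      = ((N:ℝ))⁻¹ * ‖∑ r : ZMod N, D r‖ := by
    rw [← Real.norm_eq_abs, ← Complex.norm_real, hdiff, norm_mul, norm_inv, Complex.norm_natCast]
  -- per-term bounds
  have hΓbound : ∀ r ∈ Γ, ‖D r‖ ≤ (3 * η + 3 * η ^ 2 + η ^ 3) * ‖F r‖ ^ 3 := by
    intro r hr
    have hb1 : ‖bb r - 1‖ ≤ η := (hβ r hr).1
    have hbneg : bb (-r) = (starRingEnd ℂ) (bb r) := ftransf_neg β r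
    have hFneg : ‖F (-r)‖ = ‖F r‖ := norm_ftransf_neg (ind A) r
    have hDr : D r = F r ^ 2 * F (-r) * (1 - bb r ^ 2 * (starRingEnd ℂ) (bb r)) := by
      rw [hDdef]; simp only; rw [hbneg]; ring
    rw [hDr, norm_mul, norm_mul, norm_pow, hFneg]
    calc ‖F r‖ ^ 2 * ‖F r‖ * ‖1 - bb r ^ 2 * (starRingEnd ℂ) (bb r)‖
        ≤ ‖F r‖ ^ 2 * ‖F r‖ * (3 * η + 3 * η ^ 2 + η ^ 3) := by
          refine mul_le_mul_of_nonneg_left (scalar_bound hb1) (by positivity)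
      _ = (3 * η + 3 * η ^ 2 + η ^ 3) * ‖F r‖ ^ 3 := by ring
  have hΓcbound : ∀ r : ZMod N, ‖D r‖ ≤ 2 * ‖F r‖ ^ 3 := by
    intro r
    have hFneg : ‖F (-r)‖ = ‖F r‖ := norm_ftransf_neg (ind A) r
    have hb1 : ‖bb r‖ ≤ 1 := norm_beta_le B r
    have hb2 : ‖bb (-r)‖ ≤ 1 := norm_beta_le B (-r)
    have e1 : ‖F r ^ 2 * F (-r)‖ = ‖F r‖ ^ 3 := by
      rw [norm_mul, norm_pow, hFneg]; ring
    have e2 : ‖(bb r * F r) ^ 2 * (bb (-r) * F (-r))‖ ≤ ‖F r‖ ^ 3 := by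
      rw [norm_mul, norm_pow, norm_mul, norm_mul, hFneg]
      calc (‖bb r‖ * ‖F r‖) ^ 2 * (‖bb (-r)‖ * ‖F r‖)
          ≤ (1 * ‖F r‖) ^ 2 * (1 * ‖F r‖) := by
            refine mul_le_mul ?_ ?_ (by positivity) (by positivity)
            · exact pow_le_pow_left₀ (by positivity) (by nlinarith [norm_nonneg (F r)]) 2
            · nlinarith [norm_nonneg (F r)]
        _ = ‖F r‖ ^ 3 := by ring
    calc ‖D r‖ ≤ ‖F r ^ 2 * F (-r)‖ + ‖(bb r * F r) ^ 2 * (bb (-r) * F (-r))‖ :=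
          norm_sub_le _ _
      _ ≤ ‖F r‖ ^ 3 + ‖F r‖ ^ 3 := by rw [e1]; exact add_le_add le_rfl e2
      _ = 2 * ‖F r‖ ^ 3 := by ring
  have hsum : ‖∑ r : ZMod N, D r‖
      ≤ (3 * η + 3 * η ^ 2 + η ^ 3) * (∑ r ∈ Γ, ‖F r‖ ^ 3) + 2 * ∑ r ∈ Γᶜ, ‖F r‖ ^ 3 := by
    refine le_trans (norm_sum_le _ _) ?_
    rw [← Finset.sum_add_sum_compl Γ (fun r => ‖D r‖)]
    refine add_le_add ?_ ?_
    · rw [Finset.mul_sum]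
      exact Finset.sum_le_sum hΓbound
    · rw [Finset.mul_sum]
      exact Finset.sum_le_sum fun r _ => hΓcbound r
  rw [habs]
  calc ((N:ℝ))⁻¹ * ‖∑ r : ZMod N, D r‖
      ≤ ((N:ℝ))⁻¹ * ((3 * η + 3 * η ^ 2 + η ^ 3) * (∑ r ∈ Γ, ‖F r‖ ^ 3)
          + 2 * ∑ r ∈ Γᶜ, ‖F r‖ ^ 3) := by
        exact mul_le_mul_of_nonneg_left hsum (by positivity)
    _ = (1 / N) * (3 * η + 3 * η ^ 2 + η ^ 3) * (∑ r ∈ Γ, ‖F r‖ ^ 3)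
          + (2 / N) * ∑ r ∈ Γᶜ, ‖F r‖ ^ 3 := by
        field_simp
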